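/- arXiv:2005.06441 — 3 statements merged into one kernel-verified Lean document; each statement's English description precedes it below -/
import Mathlib

section
/- If A is an n×n real symmetric PSD matrix with all entries bounded in absolute value by 1, then for any 1 ≤ k ≤ n, ∑_{i>k} σ_i(A)² ≤ n²/k. -/
open Matrix BigOperators Finset

lemma aux_trace_eq {n : ℕ} (A : Matrix (Fin n) (Fin n) ℝ) (hA : A.IsHermitian) :
    A.trace = ∑ i, hA.eigenvalues i := by
  rw [hA.trace_eq_sum_eigenvalues]
  simp

/-- If `A` is an `n × n` real symmetric PSD matrix with all entries bounded by `1` in absolute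
value, then for any `1 ≤ k ≤ n`, the sum of the squares of the smallest `n - k` singular values
of `A` (its eigenvalues, listed here in non-increasing order `σ`) is at most `n² / k`. -/
theorem stmt_1 {n : ℕ} (hn : 0 < n) (A : Matrix (Fin n) (Fin n) ℝ)
    (hA : A.PosSemidef) (hbound : ∀ i j, |A i j| ≤ 1)
    (σ : Fin n → ℝ) (e : Equiv.Perm (Fin n))
    (hσe : ∀ i, σ i = hA.1.eigenvalues (e i))
    (hmono : ∀ i j : Fin n, i ≤ j → σ j ≤ σ i)
    (k : ℕ) (hk1 : 1 ≤ k) (hkn : k ≤ n) :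
    ∑ i : Fin n, (if k ≤ (i : ℕ) then σ i ^ 2 else 0) ≤ (n : ℝ) ^ 2 / k := by
  have hσ0 : ∀ i, 0 ≤ σ i := fun i => (hσe i) ▸ hA.eigenvalues_nonneg (e i)
  have hk0 : (0:ℝ) < k := by exact_mod_cast hk1
  have hsum : ∑ i, σ i ≤ n := by
    have h1 : ∑ i, σ i = ∑ i, hA.1.eigenvalues i := by
      simp only [hσe]
      exact Equiv.sum_comp e _
    have h3 : A.trace ≤ n := by
      rw [Matrix.trace]
      calc ∑ i, A.diag i ≤ ∑ _i : Fin n, (1:ℝ) :=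
            Finset.sum_le_sum fun i _ => le_trans (le_abs_self _) (hbound i i)
        _ = n := by simp
    rw [h1, ← aux_trace_eq A hA.1]
    exact h3
  have hbd : ∀ i : Fin n, k ≤ (i:ℕ) → σ i ≤ n / k := by
    intro i hi
    rw [le_div_iff₀ hk0]
    have hcard : (Finset.univ.filter (fun j : Fin n => (j:ℕ) < k)).card = k := by
      have heq : Finset.univ.filter (fun j : Fin n => (j:ℕ) < k)
          = Finset.map (Fin.castLEEmb hkn) Finset.univ := by
        ext j
        simp [Fin.exists_iff, Fin.ext_iff, eq_comm]
      rw [heq, Finset.card_map, Finset.card_univ, Fintype.card_fin]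
    have h1 : (k:ℝ) * σ i ≤ ∑ j ∈ Finset.univ.filter (fun j : Fin n => (j:ℕ) < k), σ j := by
      calc (k:ℝ) * σ i = ∑ _j ∈ Finset.univ.filter (fun j : Fin n => (j:ℕ) < k), σ i := by
            rw [Finset.sum_const, hcard]; ring
        _ ≤ _ := Finset.sum_le_sum fun j hj => by
            apply hmono j i
            have : (j:ℕ) < k := (Finset.mem_filter.mp hj).2
            exact Fin.le_def.mpr (le_trans (le_of_lt this) hi)
    have h2 : ∑ j ∈ Finset.univ.filter (fun j : Fin n => (j:ℕ) < k), σ j ≤ ∑ j, σ j :=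
      Finset.sum_le_sum_of_subset_of_nonneg (Finset.filter_subset _ _) (fun j _ _ => hσ0 j)
    nlinarith
  calc ∑ i : Fin n, (if k ≤ (i : ℕ) then σ i ^ 2 else 0)
      ≤ ∑ i : Fin n, (n / k) * σ i := by
        apply Finset.sum_le_sum
        intro i _
        split
        · next h =>
          have := hbd i h
          have := hσ0 i
          nlinarith
        · exact mul_nonneg (by positivity) (hσ0 i)
    _ = (n / k) * ∑ i, σ i := by rw [Finset.mul_sum]
    _ ≤ (n / k) * n := by
        apply mul_le_mul_of_nonneg_left hsum
        positivity
    _ = (n:ℝ)^2 / k := by ring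
end

section
/- Let A be an n×n matrix with ‖A‖_∞ ≤ 1, let y ∈ ℝⁿ with ‖y‖_2 ≤ 1 and yᵀAy < −εn for some ε ∈ (0,1). Let δ_1,...,δ_n be independent Bernoulli(k/n) random variables with k ≥ 8/ε. Then E[∑_{i,j} y_i A_{ij} y_j δ_i δ_j] ≤ −εk²/(4n). -/
open Matrix BigOperators Finset MeasureTheory ProbabilityTheory

/-- Let `A` be an `n × n` matrix with `‖A‖_∞ ≤ 1`, `y ∈ ℝⁿ` with `‖y‖₂ ≤ 1` and
`yᵀ A y < -ε n` for some `ε ∈ (0,1)`. Let `δ₁, …, δₙ` be independent Bernoulli(`k/n`)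
indicator random variables with `k ≥ 8/ε`. Then
`E[∑_{i,j} y_i A_{ij} y_j δ_i δ_j] ≤ -ε k² / (4 n)`. -/
theorem stmt_5 {n : ℕ} (hn : 0 < n) (A : Matrix (Fin n) (Fin n) ℝ)
    (hbound : ∀ i j, |A i j| ≤ 1) (y : Fin n → ℝ) (hy : ∑ i, y i ^ 2 ≤ 1)
    (ε : ℝ) (hε : 0 < ε) (hε1 : ε < 1)
    (hquad : y ⬝ᵥ A.mulVec y < -(ε * n))
    (k : ℕ) (hk : (8 : ℝ) / ε ≤ k) (hkn : k ≤ n)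
    {Ω : Type} [MeasurableSpace Ω] (μ : Measure Ω) [IsProbabilityMeasure μ]
    (δ : Fin n → Ω → ℝ) (hmeas : ∀ i, Measurable (δ i))
    (h01 : ∀ i ω, δ i ω = 0 ∨ δ i ω = 1)
    (hp : ∀ i, μ {ω | δ i ω = 1} = ENNReal.ofReal ((k : ℝ) / n))
    (hindep : iIndepFun δ μ) :
    (∫ ω, (∑ i, ∑ j, y i * A i j * y j * δ i ω * δ j ω) ∂μ)
      ≤ -(ε * k ^ 2 / (4 * n)) := by
  have hn' : (0:ℝ) < n := by exact_mod_cast hn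
  set p : ℝ := (k:ℝ)/n with hp_def
  have hp0 : 0 ≤ p := by positivity
  have hp1 : p ≤ 1 := by
    rw [hp_def, div_le_one hn']; exact_mod_cast hkn
  have hindic : ∀ i, δ i = Set.indicator {ω | δ i ω = 1} (fun _ => (1:ℝ)) := by
    intro i; funext ω
    rcases h01 i ω with h | h
    · rw [h, Set.indicator_of_notMem]; simp [Set.mem_setOf_eq, h]
    · rw [h, Set.indicator_of_mem]; exact h
  have hmset : ∀ i, MeasurableSet {ω | δ i ω = 1} := fun i =>
    (hmeas i) (measurableSet_singleton 1)
  have hint : ∀ i, Integrable (δ i) μ := by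
    intro i; rw [hindic i]
    exact (integrable_const (1:ℝ)).indicator (hmset i)
  have hEδ : ∀ i, ∫ ω, δ i ω ∂μ = p := by
    intro i
    rw [show (fun ω => δ i ω) = δ i from rfl, hindic i,
      integral_indicator_const _ (hmset i), measureReal_def, hp i, smul_eq_mul, mul_one,
      ENNReal.toReal_ofReal hp0]
  have hintprod : ∀ i j, Integrable (fun ω => δ i ω * δ j ω) μ := by
    intro i j
    apply (hint j).bdd_mul (c := 1) (hmeas i).aestronglyMeasurable
    exact Filter.Eventually.of_forall (fun ω => by rcases h01 i ω with h | h <;> simp [h])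
  have hE2 : ∀ i j, ∫ ω, δ i ω * δ j ω ∂μ = if i = j then p else p^2 := by
    intro i j
    by_cases hij : i = j
    · subst hij
      have : (fun ω => δ i ω * δ i ω) = δ i := by
        funext ω; rcases h01 i ω with h | h <;> simp [h]
      rw [if_pos rfl, this, hEδ i]
    · rw [if_neg hij, (hindep.indepFun hij).integral_fun_mul_eq_mul_integral
        (hmeas i).aestronglyMeasurable (hmeas j).aestronglyMeasurable, hEδ i, hEδ j, sq]
  have hterm : ∀ i j, Integrable (fun ω => y i * A i j * y j * δ i ω * δ j ω) μ := by
    intro i j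
    have := (hintprod i j).const_mul (y i * A i j * y j)
    simpa [mul_assoc] using this
  have hswap : (∫ ω, (∑ i, ∑ j, y i * A i j * y j * δ i ω * δ j ω) ∂μ)
      = ∑ i, ∑ j, (y i * A i j * y j) * (if i = j then p else p^2) := by
    rw [integral_finset_sum _ (fun i _ => integrable_finset_sum _ (fun j _ => hterm i j))]
    refine Finset.sum_congr rfl (fun i _ => ?_)
    rw [integral_finset_sum _ (fun j _ => hterm i j)]
    refine Finset.sum_congr rfl (fun j _ => ?_)
    rw [← hE2 i j, ← integral_const_mul]
    congr 1; funext ω; ring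
  rw [hswap]
  -- rewrite the sum
  set S : ℝ := ∑ i, ∑ j, y i * A i j * y j with hS_def
  set D : ℝ := ∑ i, y i * A i i * y i with hD_def
  have hsum : (∑ i, ∑ j, (y i * A i j * y j) * (if i = j then p else p^2))
      = p^2 * S + (p - p^2) * D := by
    have : ∀ i j : Fin n, (y i * A i j * y j) * (if i = j then p else p^2)
        = p^2 * (y i * A i j * y j)
          + (if j = i then (p - p^2) * (y i * A i j * y j) else 0) := by
      intro i j
      by_cases hij : i = j
      · subst hij; simp; ring
      · rw [if_neg hij, if_neg (Ne.symm hij)]; ring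
    simp only [this, Finset.sum_add_distrib, ← Finset.mul_sum, Finset.sum_ite_eq, Finset.sum_ite_eq',
      Finset.mem_univ, if_pos, hS_def, hD_def, Finset.mul_sum]
  rw [hsum]
  -- facts
  have hS : S < -(ε * n) := by
    have : y ⬝ᵥ A.mulVec y = S := by
      simp only [dotProduct, Matrix.mulVec, hS_def, Finset.mul_sum]
      exact Finset.sum_congr rfl (fun i _ => Finset.sum_congr rfl (fun j _ => by ring))
    rwa [this] at hquad
  have hD : |D| ≤ 1 := by
    calc |D| ≤ ∑ i, |y i * A i i * y i| := Finset.abs_sum_le_sum_abs _ _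
    _ ≤ ∑ i, y i ^ 2 := by
        refine Finset.sum_le_sum (fun i _ => ?_)
        rw [abs_mul, abs_mul]
        calc |y i| * |A i i| * |y i| ≤ |y i| * 1 * |y i| := by
              apply mul_le_mul_of_nonneg_right _ (abs_nonneg _)
              exact mul_le_mul_of_nonneg_left (hbound i i) (abs_nonneg _)
        _ = y i ^ 2 := by rw [mul_one, ← abs_mul, ← sq, abs_of_nonneg (sq_nonneg _)]
    _ ≤ 1 := hy
  have hεk : 8 ≤ ε * k := by
    rw [div_le_iff₀ hε] at hk; linarith [hk]
  have hk0 : (0:ℝ) < k := by nlinarith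
  have habsD : (p - p^2) * D ≤ p := by
    have h1 : 0 ≤ p - p^2 := by nlinarith
    have h2 : D ≤ 1 := (abs_le.mp hD).2
    nlinarith
  have hmain : p^2 * S ≤ p^2 * (-(ε * n)) :=
    mul_le_mul_of_nonneg_left hS.le (by positivity)
  have hpn : p * n = k := by rw [hp_def]; field_simp
  -- final arithmetic
  have : p^2 * (-(ε * n)) + p = -(ε * k^2 / n) + k / n := by
    rw [hp_def]; field_simp
  have hfin : -(ε * (k:ℝ)^2 / n) + k / n ≤ -(ε * k^2 / (4*n)) := by
    have key : ((k:ℝ) - ε*k^2) ≤ -(ε*k^2)/4 := by nlinarith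
    calc -(ε * (k:ℝ)^2/n)+k/n = ((k:ℝ) - ε*k^2)/n := by ring
      _ ≤ (-(ε*k^2)/4)/n := (div_le_div_iff_of_pos_right hn').mpr key
      _ = -(ε*(k:ℝ)^2/(4*n)) := by ring
  linarith
end

section
/- Let D be a real symmetric n×n matrix with ‖D‖_∞ ≤ 1 whose negative eigenvalues satisfy ∑_{i: λ_i < 0} λ_i² ≥ εn², and suppose additionally that λ_min(D) > −n/(2k) for some integer k ≥ 2/ε. Then the tail of the squared singular values satisfies ∑_{i>k} σ_i(D)² > εn²/2. -/
open Matrix BigOperators Finset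

/-- Let `D` be a real symmetric `n × n` matrix with `‖D‖_∞ ≤ 1` whose negative eigenvalues
satisfy `∑_{i : λᵢ < 0} λᵢ² ≥ ε n²`, and suppose `λ_min(D) > -n/(2k)` for an integer
`k ≥ 2/ε` (with `ε ∈ (0,1]`). Then the tail of the squared singular values (the absolute
values of the eigenvalues, sorted in non-increasing order `σ`) satisfies
`∑_{i > k} σᵢ(D)² > ε n² / 2`. -/
theorem stmt_17 {n : ℕ} (hn : 0 < n) (D : Matrix (Fin n) (Fin n) ℝ)
    (hD : D.IsHermitian) (hbound : ∀ i j, |D i j| ≤ 1)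
    (ε : ℝ) (hε : 0 < ε) (hε1 : ε ≤ 1)
    (k : ℕ) (hk : 2 / ε ≤ k)
    (hfar : ε * n ^ 2 ≤ ∑ i, if hD.eigenvalues i < 0 then hD.eigenvalues i ^ 2 else 0)
    (hmin : ∀ i, -((n : ℝ) / (2 * k)) < hD.eigenvalues i)
    (σ : Fin n → ℝ) (e : Equiv.Perm (Fin n))
    (hσ : ∀ i, σ i = |hD.eigenvalues (e i)|)
    (hmono : ∀ i j : Fin n, i ≤ j → σ j ≤ σ i) :
    ε * n ^ 2 / 2 < ∑ i : Fin n, (if k ≤ (i : ℕ) then σ i ^ 2 else 0) := by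
  have hnpos : (0 : ℝ) < n := by exact_mod_cast hn
  have hkpos : (0 : ℝ) < k := by
    have h2 : (0 : ℝ) < 2 / ε := by positivity
    linarith
  set lam := hD.eigenvalues with hlam
  set g : Fin n → ℝ := fun j => if lam j < 0 then lam j ^ 2 else 0 with hg
  have htot : ε * n ^ 2 ≤ ∑ i, g (e i) := by
    rw [Equiv.sum_comp e g]; exact hfar
  have hterm : ∀ i : Fin n, g (e i) ≤ σ i ^ 2 := by
    intro i
    rw [hσ i, sq_abs]
    by_cases h : lam (e i) < 0
    · simp [hg, h]
    · simp only [hg, h, if_false]; positivity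
  have hhead : ∀ i : Fin n, g (e i) ≤ ((n : ℝ) / (2 * k)) ^ 2 := by
    intro i
    by_cases h : lam (e i) < 0
    · have h1 := hmin (e i)
      have habs : |lam (e i)| ≤ (n : ℝ) / (2 * k) := by
        rw [abs_le]
        constructor
        · linarith
        · have : (0 : ℝ) ≤ (n : ℝ) / (2 * k) := by positivity
          linarith
      calc g (e i) = |lam (e i)| ^ 2 := by simp [hg, h, sq_abs]
        _ ≤ ((n : ℝ) / (2 * k)) ^ 2 := by
            nlinarith [abs_nonneg (lam (e i))]
    · simp only [hg, h, if_false]; positivity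
  have hsplit : ∑ i, g (e i) =
      (∑ i : Fin n, (if (i : ℕ) < k then g (e i) else 0)) +
      ∑ i : Fin n, (if k ≤ (i : ℕ) then g (e i) else 0) := by
    rw [← Finset.sum_add_distrib]
    apply Finset.sum_congr rfl
    intro i _
    by_cases h : (i : ℕ) < k
    · simp [h, Nat.not_le.mpr h]
    · simp [h, Nat.le_of_not_lt h]
  have hcard : (Finset.univ.filter (fun i : Fin n => (i : ℕ) < k)).card ≤ k := by
    have h1 : (Finset.univ.filter (fun i : Fin n => (i : ℕ) < k)).card ≤
        (Finset.range k).card := by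
      apply Finset.card_le_card_of_injOn (fun i : Fin n => (i : ℕ))
      · intro a ha
        simp only [Finset.mem_coe, Finset.mem_filter] at ha
        exact Finset.mem_range.mpr ha.2
      · intro a _ b _ h
        exact Fin.val_injective h
    simpa using h1
  have hheadsum : (∑ i : Fin n, (if (i : ℕ) < k then g (e i) else 0)) ≤
      (k : ℝ) * ((n : ℝ) / (2 * k)) ^ 2 := by
    calc (∑ i : Fin n, (if (i : ℕ) < k then g (e i) else 0))
        ≤ ∑ i : Fin n, (if (i : ℕ) < k then ((n : ℝ) / (2 * k)) ^ 2 else 0) := by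
          apply Finset.sum_le_sum
          intro i _
          by_cases h : (i : ℕ) < k
          · simpa [h] using hhead i
          · simp [h]
      _ = ((Finset.univ.filter (fun i : Fin n => (i : ℕ) < k)).card : ℝ) *
            ((n : ℝ) / (2 * k)) ^ 2 := by
          rw [← Finset.sum_filter, Finset.sum_const, nsmul_eq_mul]
      _ ≤ (k : ℝ) * ((n : ℝ) / (2 * k)) ^ 2 := by
          apply mul_le_mul_of_nonneg_right _ (by positivity)
          exact_mod_cast hcard
  have htail : (∑ i : Fin n, (if k ≤ (i : ℕ) then g (e i) else 0)) ≤
      ∑ i : Fin n, (if k ≤ (i : ℕ) then σ i ^ 2 else 0) := by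
    apply Finset.sum_le_sum
    intro i _
    by_cases h : k ≤ (i : ℕ)
    · simpa [h] using hterm i
    · simp [h]
  have hk2 : 2 ≤ ε * k := by
    rw [div_le_iff₀ hε] at hk
    linarith [hk]
  have hbnd : (k : ℝ) * ((n : ℝ) / (2 * k)) ^ 2 ≤ ε * n ^ 2 / 8 := by
    have heq : (k : ℝ) * ((n : ℝ) / (2 * k)) ^ 2 = (n : ℝ) ^ 2 / (4 * k) := by
      field_simp
      ring
    rw [heq, div_le_div_iff₀ (by positivity) (by norm_num)]
    nlinarith [sq_nonneg (n : ℝ)]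
  have hεn : 0 < ε * n ^ 2 := by positivity
  linarith
end
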